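/- Let X be a hyperbolic geodesic metric space and G a group acting by isometries on X. If G contains a loxodromic element and any two loxodromic elements of G share both fixed points in ∂X (G is lineal), then the limit set of G in ∂X consists of exactly these two common fixed points. -/
import Mathlib


open Filter

/-- A metric space is geodesic if any two points are joined by an isometric segment. -/
def IsGeodesicSpace (X : Type*) [MetricSpace X] : Prop :=
  ∀ x y : X, ∃ f : ℝ → X, f 0 = x ∧ f (dist x y) = y ∧
    ∀ s ∈ Set.Icc (0 : ℝ) (dist x y), ∀ t ∈ Set.Icc (0 : ℝ) (dist x y),
      dist (f s) (f t) = |s - t|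

/-- The Gromov product (x|y)_o. -/
noncomputable def gromovProd {X : Type*} [MetricSpace X] (o x y : X) : ℝ :=
  (dist o x + dist o y - dist x y) / 2

/-- δ-hyperbolicity via the Gromov product four-point inequality. -/
def IsGromovHyperbolic (X : Type*) [MetricSpace X] (δ : ℝ) : Prop :=
  ∀ o x y z : X, min (gromovProd o x y) (gromovProd o y z) - δ ≤ gromovProd o x z

/-- A sequence converges to a point of the Gromov boundary if the Gromov products of its
terms tend to infinity. -/
def GromovSeq {X : Type*} [MetricSpace X] (u : ℕ → X) : Prop :=
  ∀ o : X, Tendsto (fun p : ℕ × ℕ => gromovProd o (u p.1) (u p.2)) atTop atTop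

/-- Two sequences converge to the same boundary point if the mutual Gromov products tend to
infinity. -/
def GromovEquiv {X : Type*} [MetricSpace X] (u v : ℕ → X) : Prop :=
  GromovSeq u ∧ GromovSeq v ∧
    ∀ o : X, Tendsto (fun p : ℕ × ℕ => gromovProd o (u p.1) (v p.2)) atTop atTop

/-- An isometric group action is loxodromic at g if the stable translation length
lim d(x, gⁿx)/n is positive. -/
def Loxodromic {G X : Type*} [Group G] [MulAction G X] [MetricSpace X] (g : G) : Prop :=
  ∃ L : ℝ, 0 < L ∧ ∀ x : X, Tendsto (fun n : ℕ => dist x ((g ^ n) • x) / n) atTop (nhds L)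


section gp
variable {X : Type*} [MetricSpace X]

theorem gp_nonneg (o a b : X) : 0 ≤ gromovProd o a b := by
  have h := dist_triangle a o b
  unfold gromovProd
  rw [dist_comm a o] at h
  linarith

theorem gp_comm (o a b : X) : gromovProd o a b = gromovProd o b a := by
  unfold gromovProd; rw [dist_comm a b]; ring

theorem gp_le (o a b : X) : gromovProd o a b ≤ dist o a := by
  have h := dist_triangle o a b
  unfold gromovProd
  linarith

theorem gp_base (o o' a b : X) : gromovProd o' a b - dist o' o ≤ gromovProd o a b := by
  have h1 := dist_triangle o' o a
  have h2 := dist_triangle o' o b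
  unfold gromovProd
  linarith

theorem gp_move (o a b b' : X) : gromovProd o a b - dist b b' ≤ gromovProd o a b' := by
  have h1 := dist_triangle o b' b
  have h2 := dist_triangle a b b'
  unfold gromovProd
  rw [dist_comm b' b] at h1
  linarith

theorem gp_move2 (o a a' b : X) : gromovProd o a b - dist a a' ≤ gromovProd o a' b := by
  have h := gp_move o b a a'
  rw [gp_comm o b a, gp_comm o b a'] at h
  exact h

theorem gp_ident (o a b : X) : gromovProd o a b + gromovProd a o b = dist o a := by
  unfold gromovProd
  rw [dist_comm a o]
  ring

theorem gp_diag (o a : X) : gromovProd o a a = dist o a := by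
  unfold gromovProd
  simp

end gp

def TT (f : ℕ × ℕ → ℝ) : Prop := ∀ M : ℝ, ∃ N : ℕ, ∀ m k : ℕ, N ≤ m → N ≤ k → M ≤ f (m, k)

theorem tendsto_iff_TT {f : ℕ × ℕ → ℝ} : Tendsto f atTop atTop ↔ TT f := by
  rw [tendsto_atTop_atTop]
  constructor
  · intro h M
    obtain ⟨i, hi⟩ := h M
    exact ⟨max i.1 i.2, fun m k hm hk =>
      hi (m, k) ⟨le_trans (le_max_left _ _) hm, le_trans (le_max_right _ _) hk⟩⟩
  · intro h M
    obtain ⟨N, hN⟩ := h M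
    exact ⟨(N, N), fun a ha => by simpa using hN a.1 a.2 ha.1 ha.2⟩

theorem chain_lemma {X : Type*} [MetricSpace X] {δ : ℝ} (hδ : 0 ≤ δ)
    (hhyp : IsGromovHyperbolic X δ)
    (p : ℤ → X) (ℓ S : ℝ) (hS : 0 ≤ S)
    (hstep : ∀ i : ℤ, dist (p i) (p (i + 1)) = ℓ)
    (hvert : ∀ i : ℤ, gromovProd (p (i + 1)) (p i) (p (i + 2)) ≤ S)
    (hell : 2 * S + 4 * δ + 1 ≤ ℓ) :
    ∀ i j k : ℤ, i < j → j < k → gromovProd (p j) (p i) (p k) ≤ S + 2 * δ := by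
  suffices H : ∀ n : ℕ, ∀ i j k : ℤ, i < j → j < k → k - i ≤ (n : ℤ) →
      gromovProd (p j) (p i) (p k) ≤ S + 2 * δ by
    intro i j k hij hjk
    exact H (k - i).toNat i j k hij hjk (by omega)
  intro n
  induction n with
  | zero => intro i j k hij hjk h; omega
  | succ n IH =>
    intro i j k hij hjk hle
    by_cases hj1 : j = i + 1
    · subst hj1
      by_cases hk2 : k = i + 2
      · subst hk2
        exact le_trans (hvert i) (by linarith)
      · -- penult-left, k ≥ i + 3
        have hk3 : i + 3 ≤ k := by omega
        have hB : gromovProd (p (i + 2)) (p (i + 1)) (p k) ≤ S + 2 * δ :=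
          IH (i + 1) (i + 2) k (by omega) (by omega) (by omega)
        have hdist : dist (p (i + 1)) (p (i + 2)) = ℓ := by
          have := hstep (i + 1); rwa [show i + 1 + 1 = i + 2 by ring] at this
        have hid := gp_ident (p (i + 1)) (p (i + 2)) (p k)
        rw [hdist] at hid
        -- gromovProd (p (i+1)) (p (i+2)) (p k) ≥ ℓ - (S + 2δ)
        have hbig : ℓ - (S + 2 * δ) ≤ gromovProd (p (i + 1)) (p (i + 2)) (p k) := by linarith
        have hv := hvert i
        have h4 := hhyp (p (i + 1)) (p i) (p k) (p (i + 2))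
        rcases min_cases (gromovProd (p (i + 1)) (p i) (p k))
            (gromovProd (p (i + 1)) (p k) (p (i + 2))) with ⟨heq, _⟩ | ⟨heq, hgt⟩
        · rw [heq] at h4; linarith
        · rw [heq] at h4
          rw [gp_comm (p (i+1)) (p k) (p (i+2))] at h4
          linarith
    · by_cases hj2 : j = k - 1
      · subst hj2
        -- penult-right; i + 1 < k - 1
        have hi2 : i + 2 ≤ k - 1 := by omega
        have hB : gromovProd (p (k - 2)) (p i) (p (k - 1)) ≤ S + 2 * δ :=
          IH i (k - 2) (k - 1) (by omega) (by omega) (by omega)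
        have hdist : dist (p (k - 1)) (p (k - 2)) = ℓ := by
          have := hstep (k - 2); rw [show k - 2 + 1 = k - 1 by ring] at this
          rw [dist_comm] at this; exact this
        have hid := gp_ident (p (k - 1)) (p (k - 2)) (p i)
        rw [hdist] at hid
        have hB' : gromovProd (p (k - 2)) (p (k - 1)) (p i) ≤ S + 2 * δ := by
          rw [gp_comm]; exact hB
        have hbig : ℓ - (S + 2 * δ) ≤ gromovProd (p (k - 1)) (p (k - 2)) (p i) := by linarith
        have hv : gromovProd (p (k - 1)) (p (k - 2)) (p k) ≤ S := by
          have := hvert (k - 2)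
          rw [show k - 2 + 1 = k - 1 by ring, show k - 2 + 2 = k by ring] at this
          exact this
        have h4 := hhyp (p (k - 1)) (p k) (p i) (p (k - 2))
        have hv' : gromovProd (p (k - 1)) (p k) (p (k - 2)) ≤ S := by
          rw [gp_comm]; exact hv
        rcases min_cases (gromovProd (p (k - 1)) (p k) (p i))
            (gromovProd (p (k - 1)) (p i) (p (k - 2))) with ⟨heq, _⟩ | ⟨heq, hgt⟩
        · rw [heq] at h4
          rw [gp_comm]
          linarith
        · rw [heq] at h4
          rw [gp_comm (p (k-1)) (p i) (p (k-2))] at h4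
          linarith
      · -- interior: i + 1 < j < k - 1
        have hij2 : i + 1 < j := by omega
        have hjk2 : j + 1 < k := by omega
        have hA : gromovProd (p (j - 1)) (p i) (p j) ≤ S + 2 * δ :=
          IH i (j - 1) j (by omega) (by omega) (by omega)
        have hdistA : dist (p j) (p (j - 1)) = ℓ := by
          have := hstep (j - 1); rw [show j - 1 + 1 = j by ring] at this
          rw [dist_comm] at this; exact this
        have hidA := gp_ident (p j) (p (j - 1)) (p i)
        rw [hdistA] at hidA
        have hA' : gromovProd (p (j - 1)) (p j) (p i) ≤ S + 2 * δ := by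
          rw [gp_comm]; exact hA
        have hAU : ℓ - (S + 2 * δ) ≤ gromovProd (p j) (p (j - 1)) (p i) := by linarith
        have hB : gromovProd (p (j + 1)) (p j) (p k) ≤ S + 2 * δ :=
          IH j (j + 1) k (by omega) (by omega) (by omega)
        have hdistB : dist (p j) (p (j + 1)) = ℓ := hstep j
        have hidB := gp_ident (p j) (p (j + 1)) (p k)
        rw [hdistB] at hidB
        have hBV : ℓ - (S + 2 * δ) ≤ gromovProd (p j) (p (j + 1)) (p k) := by linarith
        have hv : gromovProd (p j) (p (j - 1)) (p (j + 1)) ≤ S := by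
          have := hvert (j - 1)
          rw [show j - 1 + 1 = j by ring, show j - 1 + 2 = j + 1 by ring] at this
          exact this
        -- step 1: gromovProd (p j) (p (j+1)) (p i) ≤ S + δ
        have h4a := hhyp (p j) (p (j + 1)) (p i) (p (j - 1))
        have hv' : gromovProd (p j) (p (j + 1)) (p (j - 1)) ≤ S := by
          rw [gp_comm]; exact hv
        have hX : gromovProd (p j) (p (j + 1)) (p i) ≤ S + δ := by
          rcases min_cases (gromovProd (p j) (p (j + 1)) (p i))
              (gromovProd (p j) (p i) (p (j - 1))) with ⟨heq, _⟩ | ⟨heq, hgt⟩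
          · rw [heq] at h4a; linarith
          · rw [heq] at h4a
            rw [gp_comm (p j) (p i) (p (j-1))] at h4a
            linarith
        -- step 2
        have h4b := hhyp (p j) (p i) (p k) (p (j + 1))
        have hX' : gromovProd (p j) (p i) (p (j + 1)) ≤ S + δ := by
          rw [gp_comm]; exact hX
        rcases min_cases (gromovProd (p j) (p i) (p k))
            (gromovProd (p j) (p k) (p (j + 1))) with ⟨heq, _⟩ | ⟨heq, hgt⟩
        · rw [heq] at h4b; linarith
        · rw [heq] at h4b
          rw [gp_comm (p j) (p k) (p (j+1))] at h4b
          linarith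

section setup
variable {G X : Type*} [Group G] [MulAction G X] [MetricSpace X]
variable (hiso : ∀ g : G, Isometry (fun x : X => g • x))

theorem dist_smul' (hiso : ∀ g : G, Isometry (fun x : X => g • x)) (g : G) (a b : X) :
    dist (g • a) (g • b) = dist a b :=
  (hiso g).dist_eq a b

theorem gp_smul' (hiso : ∀ g : G, Isometry (fun x : X => g • x)) (g : G) (o a b : X) :
    gromovProd (g • o) (g • a) (g • b) = gromovProd o a b := by
  unfold gromovProd
  rw [dist_smul' hiso, dist_smul' hiso, dist_smul' hiso]

variable (g₀ : G)
include hiso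

theorem horb (z : X) (c e : ℤ) :
    dist (g₀ ^ c • z) (g₀ ^ e • z) = dist z (g₀ ^ (e - c) • z) := by
  conv_lhs => rw [show g₀ ^ e = g₀ ^ c * g₀ ^ (e - c) by rw [← zpow_add]; congr 1; ring,
    mul_smul]
  exact dist_smul' hiso _ _ _

theorem hnegd (z : X) (c : ℤ) : dist z (g₀ ^ (-c) • z) = dist z (g₀ ^ c • z) := by
  have h := horb hiso g₀ z c 0
  simp only [zpow_zero, one_smul, zero_sub] at h
  rw [← h, dist_comm]

theorem hupper (z : X) (m : ℕ) :
    dist z ((g₀ ^ m) • z) ≤ m * dist z (g₀ • z) := by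
  induction m with
  | zero => simp
  | succ m ih =>
    have h1 : dist z ((g₀ ^ (m + 1)) • z) ≤ dist z ((g₀ ^ m) • z) + dist z (g₀ • z) := by
      have ht := dist_triangle z ((g₀ ^ m) • z) ((g₀ ^ (m + 1)) • z)
      have h2 : dist ((g₀ ^ m) • z) ((g₀ ^ (m + 1)) • z) = dist z (g₀ • z) := by
        rw [pow_succ, mul_smul]
        exact dist_smul' hiso _ _ _
      linarith
    push_cast
    linarith

theorem hmulsub (z : X) (m k : ℕ) :
    dist z ((g₀ ^ (k * m)) • z) ≤ k * dist z ((g₀ ^ m) • z) := by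
  induction k with
  | zero => simp
  | succ k ih =>
    have h1 : dist z ((g₀ ^ ((k + 1) * m)) • z) ≤
        dist z ((g₀ ^ (k * m)) • z) + dist z ((g₀ ^ m) • z) := by
      have ht := dist_triangle z ((g₀ ^ (k * m)) • z) ((g₀ ^ ((k + 1) * m)) • z)
      have h2 : dist ((g₀ ^ (k * m)) • z) ((g₀ ^ ((k + 1) * m)) • z) =
          dist z ((g₀ ^ m) • z) := by
        rw [show (k + 1) * m = k * m + m by ring, pow_add, mul_smul]
        exact dist_smul' hiso _ _ _
      linarith
    push_cast
    linarith

variable {L : ℝ} (hLpos : 0 < L)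
variable (hLlim : ∀ x : X, Tendsto (fun n : ℕ => dist x ((g₀ ^ n) • x) / n) atTop (nhds L))
include hLlim

theorem hlowN (z : X) (m : ℕ) : L * m ≤ dist z ((g₀ ^ m) • z) := by
  rcases Nat.eq_zero_or_pos m with hm | hm
  · subst hm; simp
  · have hmono : Tendsto (fun k : ℕ => k * m) atTop atTop := by
      apply tendsto_atTop_atTop.mpr
      intro b
      exact ⟨b, fun a ha => le_trans ha (by calc a = a * 1 := (mul_one a).symm
        _ ≤ a * m := Nat.mul_le_mul_left a hm)⟩
    have hc : Tendsto (fun k : ℕ => dist z ((g₀ ^ (k * m)) • z) / ((k * m : ℕ) : ℝ))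
        atTop (nhds L) := (hLlim z).comp hmono
    have hub : ∀ᶠ k : ℕ in atTop,
        dist z ((g₀ ^ (k * m)) • z) / ((k * m : ℕ) : ℝ) ≤ dist z ((g₀ ^ m) • z) / m := by
      filter_upwards [eventually_ge_atTop 1] with k hk
      have hkm : (0 : ℝ) < ((k * m : ℕ) : ℝ) := by
        have : 0 < k * m := Nat.mul_pos hk hm
        exact_mod_cast this
      have hm' : (0 : ℝ) < (m : ℝ) := by exact_mod_cast hm
      rw [div_le_div_iff₀ hkm hm']
      have h1 := hmulsub hiso g₀ z m k
      push_cast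
      nlinarith [dist_nonneg (x := z) (y := (g₀ ^ m) • z)]
    have hL2 : L ≤ dist z ((g₀ ^ m) • z) / m := le_of_tendsto hc hub
    have hm' : (0 : ℝ) < (m : ℝ) := by exact_mod_cast hm
    rw [le_div_iff₀ hm'] at hL2
    linarith

include hLpos in
theorem hpick (z : X) (R : ℝ) (hR : 0 ≤ R) :
    ∃ a : ℕ, 1 ≤ a ∧ dist z ((g₀ ^ a) • z) + R ≤ dist z ((g₀ ^ (2 * a)) • z) := by
  have hev : ∀ᶠ n : ℕ in atTop, dist z ((g₀ ^ n) • z) / n < L + L / 2 :=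
    (hLlim z).eventually_lt_const (by linarith)
  obtain ⟨N, hN⟩ := eventually_atTop.mp hev
  obtain ⟨a, ha1, haN, haR⟩ : ∃ a : ℕ, 1 ≤ a ∧ N ≤ a ∧ 2 * R / L ≤ (a : ℝ) := by
    refine ⟨max N 1 + ⌈2 * R / L⌉₊ + 1, by omega, by omega, ?_⟩
    have h1 : 2 * R / L ≤ (⌈2 * R / L⌉₊ : ℝ) := Nat.le_ceil _
    have h2 : (⌈2 * R / L⌉₊ : ℝ) ≤ ((max N 1 + ⌈2 * R / L⌉₊ + 1 : ℕ) : ℝ) := by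
      exact_mod_cast (by omega : ⌈2 * R / L⌉₊ ≤ max N 1 + ⌈2 * R / L⌉₊ + 1)
    linarith
  have hapos : (0 : ℝ) < (a : ℝ) := by exact_mod_cast ha1
  have hup : dist z ((g₀ ^ a) • z) < (L + L / 2) * a := by
    have := hN a haN
    rwa [div_lt_iff₀ hapos] at this
  have hlo : L * ((2 * a : ℕ) : ℝ) ≤ dist z ((g₀ ^ (2 * a)) • z) := hlowN hiso g₀ hLlim z (2 * a)
  have hLa : 2 * R ≤ L * a := by
    rw [div_le_iff₀ hLpos] at haR
    linarith
  refine ⟨a, ha1, ?_⟩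
  push_cast at hlo
  linarith
include hLpos in
theorem chainApp (δ : ℝ) (hδ : 0 ≤ δ) (hhyp : IsGromovHyperbolic X δ) (z : X) :
    ∃ a : ℕ, 1 ≤ a ∧ ∀ (v : G) (i j k : ℤ), i < j → j < k →
      gromovProd (v • g₀ ^ (j * (a : ℤ)) • z) (v • g₀ ^ (i * (a : ℤ)) • z)
          (v • g₀ ^ (k * (a : ℤ)) • z)
        ≤ gromovProd z (g₀ ^ (-(a : ℤ)) • z) (g₀ ^ ((a : ℤ)) • z) + 2 * δ := by
  obtain ⟨a, ha1, hgap⟩ := hpick hiso g₀ hLpos hLlim z (4 * δ + 1) (by linarith)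
  set S : ℝ := gromovProd z (g₀ ^ (-(a : ℤ)) • z) (g₀ ^ ((a : ℤ)) • z) with hSdef
  set ℓ : ℝ := dist z (g₀ ^ ((a : ℤ)) • z) with hldef
  refine ⟨a, ha1, fun v => ?_⟩
  have hz1 : ∀ m : ℕ, (g₀ ^ m) • z = g₀ ^ ((m : ℤ)) • z := by
    intro m; rw [zpow_natCast]
  have hell : 2 * S + 4 * δ + 1 ≤ ℓ := by
    have hcross : dist (g₀ ^ (-(a : ℤ)) • z) (g₀ ^ ((a : ℤ)) • z)
        = dist z (g₀ ^ ((2 * a : ℕ) : ℤ) • z) := by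
      rw [horb hiso g₀ z (-(a : ℤ)) ((a : ℤ))]
      congr 2
      push_cast; ring
    have hneg' : dist z (g₀ ^ (-(a : ℤ)) • z) = ℓ := by
      rw [hnegd hiso g₀ z ((a : ℤ))]
    have hS' : S = (ℓ + ℓ - dist z (g₀ ^ ((2 * a : ℕ) : ℤ) • z)) / 2 := by
      rw [hSdef]; unfold gromovProd; rw [hcross, hneg', hldef]
    rw [← hz1 a, ← hz1 (2 * a)] at *
    linarith [hgap, hS']
  have hSnn : 0 ≤ S := gp_nonneg _ _ _
  refine chain_lemma hδ hhyp (fun i => v • g₀ ^ (i * (a : ℤ)) • z) ℓ S hSnn ?_ ?_ hell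
  · intro i
    rw [dist_smul' hiso, horb hiso g₀ z]
    congr 2
    ring
  · intro i
    show gromovProd (v • g₀ ^ ((i + 1) * (a : ℤ)) • z) (v • g₀ ^ (i * (a : ℤ)) • z)
        (v • g₀ ^ ((i + 2) * (a : ℤ)) • z) ≤ S
    have h1 : (i * (a : ℤ)) = (i + 1) * (a : ℤ) + -(a : ℤ) := by ring
    have h2 : ((i + 2) * (a : ℤ)) = (i + 1) * (a : ℤ) + (a : ℤ) := by ring
    rw [h1, h2, zpow_add, zpow_add, mul_smul, mul_smul, ← mul_smul v, ← mul_smul v,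
      ← mul_smul v, gp_smul' hiso]
end setup

set_option maxHeartbeats 4000000 in
/-- Let X be a hyperbolic geodesic metric space and G a group acting by isometries
on X. If G contains a loxodromic element and any two loxodromic elements of G share both fixed
points in ∂X (G is lineal), then the limit set of G in ∂X consists of exactly these two common
fixed points. (Boundary points are represented by Gromov sequences.) -/
theorem stmt10 {G X : Type*} [Group G] [MulAction G X] [MetricSpace X]
    (δ : ℝ) (hδ : 0 ≤ δ) (hgeo : IsGeodesicSpace X) (hhyp : IsGromovHyperbolic X δ)
    (hiso : ∀ g : G, Isometry (fun x : X => g • x))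
    (g₀ : G) (hg₀ : Loxodromic (X := X) g₀)
    (hlineal : ∀ g h : G, Loxodromic (X := X) g → Loxodromic (X := X) h → ∀ x : X,
      (GromovEquiv (fun n => (g ^ n) • x) (fun n => (h ^ n) • x) ∧
        GromovEquiv (fun n => (g⁻¹ ^ n) • x) (fun n => (h⁻¹ ^ n) • x)) ∨
      (GromovEquiv (fun n => (g ^ n) • x) (fun n => (h⁻¹ ^ n) • x) ∧
        GromovEquiv (fun n => (g⁻¹ ^ n) • x) (fun n => (h ^ n) • x))) :
    ∀ x : X,
      GromovSeq (fun n => (g₀ ^ n) • x) ∧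
      GromovSeq (fun n => (g₀⁻¹ ^ n) • x) ∧
      ¬ GromovEquiv (fun n => (g₀ ^ n) • x) (fun n => (g₀⁻¹ ^ n) • x) ∧
      ∀ (y : X) (w : ℕ → G), GromovSeq (fun n => w n • y) →
        GromovEquiv (fun n => w n • y) (fun n => (g₀ ^ n) • x) ∨
        GromovEquiv (fun n => w n • y) (fun n => (g₀⁻¹ ^ n) • x) := by
  classical
  intro x
  obtain ⟨L, hLpos, hLlim⟩ := hg₀
  have hg₀' : Loxodromic (X := X) g₀ := ⟨L, hLpos, hLlim⟩
  have hzn : ∀ (m : ℕ) (z : X), (g₀ ^ m) • z = g₀ ^ ((m : ℤ)) • z := fun m z => by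
    rw [zpow_natCast]
  have hzninv : ∀ (m : ℕ) (z : X), (g₀⁻¹ ^ m) • z = g₀ ^ (-(m : ℤ)) • z := fun m z => by
    rw [inv_pow, ← zpow_natCast g₀ m, ← zpow_neg]
  obtain ⟨a, ha1, hchainx⟩ := chainApp hiso g₀ hLpos hLlim δ hδ hhyp x
  set Sx : ℝ := gromovProd x (g₀ ^ (-(a : ℤ)) • x) (g₀ ^ ((a : ℤ)) • x) with hSxdef
  have hchx : ∀ i j k : ℤ, i < j → j < k →
      gromovProd (g₀ ^ (j * (a : ℤ)) • x) (g₀ ^ (i * (a : ℤ)) • x) (g₀ ^ (k * (a : ℤ)) • x)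
        ≤ Sx + 2 * δ := by
    intro i j k hij hjk
    have := hchainx 1 i j k hij hjk
    simpa using this
  have hfwd : GromovSeq (fun n => (g₀ ^ n) • x) := by
    rcases hlineal g₀ g₀ hg₀' hg₀' x with ⟨h1, h2⟩ | ⟨h1, h2⟩
    exacts [h1.1, h1.1]
  have hbwd : GromovSeq (fun n => (g₀⁻¹ ^ n) • x) := by
    rcases hlineal g₀ g₀ hg₀' hg₀' x with ⟨h1, h2⟩ | ⟨h1, h2⟩
    exacts [h2.1, h1.2.1]
  refine ⟨hfwd, hbwd, ?_, ?_⟩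
  · -- part 3
    intro E
    obtain ⟨N, hN⟩ := tendsto_iff_TT.mp (E.2.2 x) (Sx + 2 * δ + 1)
    have hma : N ≤ (N + 1) * a := by
      calc N ≤ (N + 1) * 1 := by omega
      _ ≤ (N + 1) * a := Nat.mul_le_mul_left _ ha1
    have hval := hN ((N + 1) * a) ((N + 1) * a) hma hma
    have hchain := hchx (-((N : ℤ) + 1)) 0 ((N : ℤ) + 1) (by omega) (by omega)
    rw [zero_mul, zpow_zero, one_smul] at hchain
    have hexp1 : (((N + 1) * a : ℕ) : ℤ) = ((N : ℤ) + 1) * (a : ℤ) := by push_cast; ring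
    have hexp2 : (-(((N + 1) * a : ℕ) : ℤ)) = (-((N : ℤ) + 1)) * (a : ℤ) := by push_cast; ring
    have e1 : (g₀ ^ ((N + 1) * a)) • x = g₀ ^ (((N : ℤ) + 1) * (a : ℤ)) • x := by
      rw [hzn, hexp1]
    have e2 : (g₀⁻¹ ^ ((N + 1) * a)) • x = g₀ ^ ((-((N : ℤ) + 1)) * (a : ℤ)) • x := by
      rw [hzninv, hexp2]
    simp only [] at hval
    rw [e1, e2] at hval
    rw [gp_comm] at hchain
    linarith
  · -- part 4
    intro y w hw
    -- generic min-extraction helper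
    have upper4 : ∀ {A B C : ℝ}, min A B - δ ≤ C → C + δ < B → A ≤ C + δ := by
      intro A B C h1 h2
      rcases min_cases A B with ⟨he, _⟩ | ⟨he, _⟩
      · rw [he] at h1; linarith
      · rw [he] at h1; linarith
    have hconjpow : ∀ (v h : G) (n : ℕ), (v * h * v⁻¹) ^ n = v * h ^ n * v⁻¹ := by
      intro v h n
      induction n with
      | zero => simp
      | succ n ih => rw [pow_succ, ih, pow_succ]; group
    have hconj : ∀ v : G, Loxodromic (X := X) (v * g₀ * v⁻¹) := by
      intro v
      refine ⟨L, hLpos, fun z => ?_⟩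
      have he : (fun n : ℕ => dist z (((v * g₀ * v⁻¹) ^ n) • z) / n)
          = fun n : ℕ => dist (v⁻¹ • z) ((g₀ ^ n) • (v⁻¹ • z)) / n := by
        funext n
        congr 1
        rw [hconjpow, mul_smul, mul_smul]
        calc dist z (v • (g₀ ^ n) • v⁻¹ • z)
            = dist (v⁻¹ • z) (v⁻¹ • v • (g₀ ^ n) • v⁻¹ • z) := (dist_smul' hiso v⁻¹ _ _).symm
          _ = dist (v⁻¹ • z) ((g₀ ^ n) • v⁻¹ • z) := by rw [inv_smul_smul]
      rw [he]
      exact hLlim (v⁻¹ • z)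
    have hlowZ : ∀ (z : X) (c : ℤ), 0 ≤ c → L * (c : ℝ) ≤ dist z (g₀ ^ c • z) := by
      intro z c hc
      obtain ⟨m, rfl⟩ := Int.eq_ofNat_of_zero_le hc
      rw [← hzn]
      have := hlowN hiso g₀ hLlim z m
      simpa using this
    have hnegZ : ∀ (z : X) (c : ℤ), dist z (g₀ ^ (-c) • z) = dist z (g₀ ^ c • z) :=
      hnegd hiso g₀
    -- the A-line
    set A : ℤ → X := fun e => g₀ ^ (e * (a : ℤ)) • x with hAdef
    have hA0 : A 0 = x := by simp [hAdef]
    set Bx : ℝ := Sx + 2 * δ with hBxdef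
    have hchA : ∀ i j k : ℤ, i < j → j < k → gromovProd (A j) (A i) (A k) ≤ Bx := by
      intro i j k hij hjk
      have := hchx i j k hij hjk
      simpa [hAdef, hBxdef] using this
    have hSx0 : 0 ≤ Sx := hSxdef ▸ gp_nonneg _ _ _
    have hBx0 : 0 ≤ Bx := by rw [hBxdef]; linarith
    have hcastA : ∀ m : ℕ, (g₀ ^ (m * a)) • x = A ((m : ℤ)) := by
      intro m
      rw [hzn, show (((m * a : ℕ)) : ℤ) = (m : ℤ) * (a : ℤ) by push_cast; ring]
    have hcastA' : ∀ m : ℕ, (g₀⁻¹ ^ (m * a)) • x = A (-(m : ℤ)) := by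
      intro m
      rw [hzninv, show (-((m * a : ℕ) : ℤ)) = (-(m : ℤ)) * (a : ℤ) by push_cast; ring]
    have hdepth : ∀ s j m : ℤ, (s = 1 ∨ s = -1) → 1 ≤ j → j < m →
        L * (j : ℝ) * (a : ℝ) - Bx ≤ gromovProd x (A (s * j)) (A (s * m)) := by
      intro s j m hs hj hjm
      have hcast : ((j * (a : ℤ) : ℤ) : ℝ) = (j : ℝ) * (a : ℝ) := by push_cast; ring
      have hdl : L * (j : ℝ) * (a : ℝ) ≤ dist x (A (s * j)) := by
        rcases hs with rfl | rfl
        · have h := hlowZ x (j * (a : ℤ)) (by positivity)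
          rw [hcast] at h
          simpa [hAdef, one_mul, mul_assoc] using h
        · have h := hlowZ x (j * (a : ℤ)) (by positivity)
          rw [hcast] at h
          have he : A (-1 * j) = g₀ ^ (-(j * (a : ℤ))) • x := by
            simp [hAdef]
          rw [he, hnegZ x (j * (a : ℤ))]
          linarith [h]
      rcases hs with rfl | rfl
      · have hch := hchA 0 j m hj (by omega)
        rw [hA0] at hch
        have hid := gp_ident x (A j) (A m)
        simp only [one_mul] at hdl ⊢
        linarith [hid, hch, hdl]
      · have hch := hchA (-m) (-j) 0 (by omega) (by omega)
        rw [hA0] at hch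
        have hch' : gromovProd (A (-j)) x (A (-m)) ≤ Bx := by
          rw [gp_comm]; exact hch
        have hid := gp_ident x (A (-j)) (A (-m))
        have he1 : A (-1 * j) = A (-j) := by norm_num
        have he2 : A (-1 * m) = A (-m) := by norm_num
        rw [he1, he2]
        have hdl' : L * (j : ℝ) * (a : ℝ) ≤ dist x (A (-j)) := by
          rw [← he1]; exact hdl
        linarith [hid, hch', hdl']
    -- the y-line
    obtain ⟨b, hb1, hchainy⟩ := chainApp hiso g₀ hLpos hLlim δ hδ hhyp y
    set Sy : ℝ := gromovProd y (g₀ ^ (-(b : ℤ)) • y) (g₀ ^ ((b : ℤ)) • y) with hSydef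
    set By : ℝ := Sy + 2 * δ with hBydef
    have hSy0 : 0 ≤ Sy := hSydef ▸ gp_nonneg _ _ _
    set BB : ℝ := By + 2 * δ with hBBdef
    set CC : ℝ := max Bx BB with hCCdef
    have hCC0 : 0 ≤ CC := le_trans hBx0 (le_max_left _ _)
    have hBxCC : Bx ≤ CC := le_max_left _ _
    have hBBCC : BB ≤ CC := le_max_right _ _
    -- key per-n fact
    have KF : ∀ n : ℕ, ∃ M : ℕ, 1 ≤ M ∧ ∀ m : ℕ, M ≤ m →
        gromovProd (w n • y) (A (-(m : ℤ))) (A ((m : ℤ))) ≤ BB := by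
      intro n
      set v : G := w n with hvdef
      set c : G := v * g₀ * v⁻¹ with hcdef
      have hcl : Loxodromic (X := X) c := hconj v
      set Q : ℤ → X := fun i => v • g₀ ^ (i * (b : ℤ)) • y with hQdef
      have hQ0 : Q 0 = v • y := by simp [hQdef]
      have hchQ : ∀ i j k : ℤ, i < j → j < k → gromovProd (Q j) (Q i) (Q k) ≤ By := by
        intro i j k hij hjk
        have := hchainy v i j k hij hjk
        simpa [hQdef, hBydef, hSydef] using this
      have hcastQ : ∀ K : ℕ, v • ((g₀ ^ (K * b)) • y) = Q ((K : ℤ)) := by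
        intro K
        rw [hzn, show (((K * b : ℕ)) : ℤ) = (K : ℤ) * (b : ℤ) by push_cast; ring]
      have hcastQ' : ∀ K : ℕ, v • ((g₀⁻¹ ^ (K * b)) • y) = Q (-(K : ℤ)) := by
        intro K
        rw [hzninv, show (-((K * b : ℕ) : ℤ)) = (-(K : ℤ)) * (b : ℤ) by push_cast; ring]
      have hcpQ : ∀ K : ℕ, (c ^ K) • (v • y) = v • ((g₀ ^ K) • y) := by
        intro K
        rw [hcdef, hconjpow, mul_smul, mul_smul, inv_smul_smul]
      have hcinv : c⁻¹ = v * g₀⁻¹ * v⁻¹ := by rw [hcdef]; group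
      have hcpQ' : ∀ K : ℕ, ((c⁻¹) ^ K) • (v • y) = v • ((g₀⁻¹ ^ K) • y) := by
        intro K
        rw [hcinv, hconjpow, mul_smul, mul_smul, inv_smul_smul]
      -- the U-lemma
      have keyU : ∀ e₁ e₂ f₁ f₂ : X, gromovProd (v • y) e₁ e₂ ≤ By →
          By + 2 * δ + 1 ≤ gromovProd (v • y) f₁ e₁ →
          By + 2 * δ + 1 ≤ gromovProd (v • y) f₂ e₂ →
          gromovProd (v • y) f₁ f₂ ≤ BB := by
        intro e₁ e₂ f₁ f₂ h0 h1 h2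
        have h0' : gromovProd (v • y) e₂ e₁ ≤ By := by rw [gp_comm]; exact h0
        have hs1 : gromovProd (v • y) e₂ f₁ ≤ gromovProd (v • y) e₂ e₁ + δ := by
          refine upper4 (hhyp (v • y) e₂ f₁ e₁) ?_
          linarith
        have hs1' : gromovProd (v • y) f₁ e₂ ≤ By + δ := by
          rw [gp_comm]; linarith
        have hs2 : gromovProd (v • y) f₁ f₂ ≤ gromovProd (v • y) f₁ e₂ + δ := by
          refine upper4 (hhyp (v • y) f₁ f₂ e₂) ?_
          linarith
        rw [hBBdef, hBydef]
        rw [hBydef] at hs1'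
        linarith
      have hQbound : ∀ K : ℕ, 1 ≤ K →
          gromovProd (v • y) (Q (-(K : ℤ))) (Q ((K : ℤ))) ≤ By := by
        intro K hK
        have h := hchQ (-(K : ℤ)) 0 ((K : ℤ)) (by omega) (by omega)
        rwa [hQ0] at h
      rcases hlineal g₀ c hg₀' hcl (v • y) with ⟨h1, h2⟩ | ⟨h1, h2⟩
      · -- uncrossed
        obtain ⟨N₁, hN₁⟩ := tendsto_iff_TT.mp (h1.2.2 (v • y)) (By + 2 * δ + 1 + dist (v • y) x)
        obtain ⟨N₂, hN₂⟩ := tendsto_iff_TT.mp (h2.2.2 (v • y)) (By + 2 * δ + 1 + dist (v • y) x)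
        refine ⟨N₁ + N₂ + 1, by omega, fun m hm => ?_⟩
        set K : ℕ := N₁ + N₂ + 1 with hKdef
        have hma : ∀ {N' : ℕ}, N' ≤ N₁ + N₂ + 1 → N' ≤ m * a := by
          intro N' h
          calc N' ≤ m := by omega
            _ = m * 1 := (mul_one m).symm
            _ ≤ m * a := Nat.mul_le_mul_left m ha1
        have hKb : ∀ {N' : ℕ}, N' ≤ N₁ + N₂ + 1 → N' ≤ K * b := by
          intro N' h
          calc N' ≤ K := by omega
            _ = K * 1 := (mul_one K).symm
            _ ≤ K * b := Nat.mul_le_mul_left K hb1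
        have hF2 := hN₁ (m * a) (K * b) (hma (by omega)) (hKb (by omega))
        simp only [] at hF2
        have hmv := gp_move2 (v • y) ((g₀ ^ (m * a)) • (v • y)) ((g₀ ^ (m * a)) • x)
          ((c ^ (K * b)) • (v • y))
        rw [dist_smul' hiso] at hmv
        have hF2' : By + 2 * δ + 1 ≤ gromovProd (v • y) (A ((m : ℤ))) (Q ((K : ℤ))) := by
          rw [← hcastA m, ← hcastQ K, ← hcpQ (K * b)]
          linarith
        have hF1 := hN₂ (m * a) (K * b) (hma (by omega)) (hKb (by omega))
        simp only [] at hF1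
        have hmv' := gp_move2 (v • y) ((g₀⁻¹ ^ (m * a)) • (v • y)) ((g₀⁻¹ ^ (m * a)) • x)
          ((c⁻¹ ^ (K * b)) • (v • y))
        rw [dist_smul' hiso] at hmv'
        have hF1' : By + 2 * δ + 1 ≤ gromovProd (v • y) (A (-(m : ℤ))) (Q (-(K : ℤ))) := by
          rw [← hcastA' m, ← hcastQ' K, ← hcpQ' (K * b)]
          linarith
        exact keyU (Q (-(K : ℤ))) (Q ((K : ℤ))) (A (-(m : ℤ))) (A ((m : ℤ)))
          (hQbound K (by omega)) hF1' hF2'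
      · -- crossed
        obtain ⟨N₁, hN₁⟩ := tendsto_iff_TT.mp (h1.2.2 (v • y)) (By + 2 * δ + 1 + dist (v • y) x)
        obtain ⟨N₂, hN₂⟩ := tendsto_iff_TT.mp (h2.2.2 (v • y)) (By + 2 * δ + 1 + dist (v • y) x)
        refine ⟨N₁ + N₂ + 1, by omega, fun m hm => ?_⟩
        set K : ℕ := N₁ + N₂ + 1 with hKdef
        have hma : ∀ {N' : ℕ}, N' ≤ N₁ + N₂ + 1 → N' ≤ m * a := by
          intro N' h
          calc N' ≤ m := by omega
            _ = m * 1 := (mul_one m).symm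
            _ ≤ m * a := Nat.mul_le_mul_left m ha1
        have hKb : ∀ {N' : ℕ}, N' ≤ N₁ + N₂ + 1 → N' ≤ K * b := by
          intro N' h
          calc N' ≤ K := by omega
            _ = K * 1 := (mul_one K).symm
            _ ≤ K * b := Nat.mul_le_mul_left K hb1
        have hF2 := hN₁ (m * a) (K * b) (hma (by omega)) (hKb (by omega))
        simp only [] at hF2
        have hmv := gp_move2 (v • y) ((g₀ ^ (m * a)) • (v • y)) ((g₀ ^ (m * a)) • x)
          ((c⁻¹ ^ (K * b)) • (v • y))
        rw [dist_smul' hiso] at hmv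
        have hF2' : By + 2 * δ + 1 ≤ gromovProd (v • y) (A ((m : ℤ))) (Q (-(K : ℤ))) := by
          rw [← hcastA m, ← hcastQ' K, ← hcpQ' (K * b)]
          linarith
        have hF1 := hN₂ (m * a) (K * b) (hma (by omega)) (hKb (by omega))
        simp only [] at hF1
        have hmv' := gp_move2 (v • y) ((g₀⁻¹ ^ (m * a)) • (v • y)) ((g₀⁻¹ ^ (m * a)) • x)
          ((c ^ (K * b)) • (v • y))
        rw [dist_smul' hiso] at hmv'
        have hF1' : By + 2 * δ + 1 ≤ gromovProd (v • y) (A (-(m : ℤ))) (Q ((K : ℤ))) := by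
          rw [← hcastA' m, ← hcastQ K, ← hcpQ (K * b)]
          linarith
        have hQb' : gromovProd (v • y) (Q ((K : ℤ))) (Q (-(K : ℤ))) ≤ By := by
          rw [gp_comm]; exact hQbound K (by omega)
        exact keyU (Q ((K : ℤ))) (Q (-(K : ℤ))) (A (-(m : ℤ))) (A ((m : ℤ)))
          hQb' hF1' hF2'
    choose M hM1 hM2 using KF
    obtain ⟨N₀, hN₀⟩ := tendsto_iff_TT.mp (hw x) (2 * CC + 3 * δ + 1)
    have hN₀' : ∀ n n' : ℕ, N₀ ≤ n → N₀ ≤ n' →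
        2 * CC + 3 * δ + 1 ≤ gromovProd x (w n • y) (w n' • y) := by
      intro n n' hn hn'
      have h := hN₀ n n' hn hn'
      simpa using h
    have hdist : ∀ n : ℕ, N₀ ≤ n → 2 * CC + 3 * δ + 1 ≤ dist x (w n • y) := by
      intro n hn
      have h := hN₀' n n hn hn
      rwa [gp_diag] at h
    have hT1 : ∀ n m : ℕ, M n ≤ m →
        gromovProd (w n • y) x (A (-(m : ℤ))) ≤ CC + δ ∨
        gromovProd (w n • y) x (A ((m : ℤ))) ≤ CC + δ := by
      intro n m hm
      have hKF : gromovProd (w n • y) (A (-(m : ℤ))) (A ((m : ℤ))) ≤ CC :=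
        le_trans (hM2 n m hm) hBBCC
      have h4 := hhyp (w n • y) (A (-(m : ℤ))) x (A ((m : ℤ)))
      rcases min_cases (gromovProd (w n • y) (A (-(m : ℤ))) x)
          (gromovProd (w n • y) x (A ((m : ℤ)))) with ⟨he, _⟩ | ⟨he, _⟩
      · left; rw [gp_comm]; rw [he] at h4; linarith
      · right; rw [he] at h4; linarith
    have hTpair : ∀ (p q : X) (e f : ℤ), e < 0 → 0 < f →
        gromovProd p x (A f) ≤ CC + δ → gromovProd q x (A e) ≤ CC + δ →
        2 * CC + 3 * δ + 1 ≤ dist x p → 2 * CC + 3 * δ + 1 ≤ dist x q →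
        gromovProd x p q ≤ CC + 2 * δ := by
      intro p q e f he hf hP hQm hdp hdq
      have hpf : CC + 2 * δ + 1 ≤ gromovProd x p (A f) := by
        have hid := gp_ident x p (A f)
        linarith
      have hqe : CC + 2 * δ + 1 ≤ gromovProd x q (A e) := by
        have hid := gp_ident x q (A e)
        linarith
      have hAef : gromovProd x (A e) (A f) ≤ CC := by
        have h := hchA e 0 f he hf
        rw [hA0] at h
        exact le_trans h hBxCC
      have hstep1 : gromovProd x (A e) p ≤ gromovProd x (A e) (A f) + δ := by
        refine upper4 (hhyp x (A e) p (A f)) ?_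
        linarith
      have hstep1' : gromovProd x p (A e) ≤ CC + δ := by
        rw [gp_comm]; linarith
      have hstep2 : gromovProd x p q ≤ gromovProd x p (A e) + δ := by
        refine upper4 (hhyp x p q (A e)) ?_
        linarith
      linarith
    obtain ⟨s, hs, Hs⟩ : ∃ s : ℤ, (s = 1 ∨ s = -1) ∧ ∀ n, N₀ ≤ n → ∀ m : ℕ, M n ≤ m →
        gromovProd (w n • y) x (A (s * (m : ℤ))) ≤ CC + δ := by
      by_cases hPM : gromovProd (w N₀ • y) x (A ((M N₀ : ℤ))) ≤ CC + δ
      · refine ⟨1, Or.inl rfl, fun n hn m hm => ?_⟩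
        rw [one_mul]
        by_contra hcon
        have hMi : gromovProd (w n • y) x (A (-(m : ℤ))) ≤ CC + δ := by
          rcases hT1 n m hm with h | h
          · exact h
          · exact absurd h hcon
        have hcontr := hTpair (w N₀ • y) (w n • y) (-(m : ℤ)) ((M N₀ : ℤ))
          (by have := hM1 n; omega) (by have := hM1 N₀; omega) hPM hMi
          (hdist N₀ le_rfl) (hdist n hn)
        linarith [hN₀' N₀ n le_rfl hn, hCC0]
      · have hMi0 : gromovProd (w N₀ • y) x (A (-((M N₀ : ℕ) : ℤ))) ≤ CC + δ := by
          rcases hT1 N₀ (M N₀) le_rfl with h | h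
          · exact h
          · exact absurd h hPM
        refine ⟨-1, Or.inr rfl, fun n hn m hm => ?_⟩
        rw [show (-1 : ℤ) * (m : ℤ) = -(m : ℤ) by ring]
        by_contra hcon
        have hPl : gromovProd (w n • y) x (A ((m : ℤ))) ≤ CC + δ := by
          rcases hT1 n m hm with h | h
          · exact absurd h hcon
          · exact h
        have hcontr := hTpair (w n • y) (w N₀ • y) (-((M N₀ : ℕ) : ℤ)) ((m : ℤ))
          (by have := hM1 N₀; omega) (by have := hM1 n; omega) hPl hMi0
          (hdist n hn) (hdist N₀ le_rfl)
        linarith [hN₀' n N₀ hn le_rfl, hCC0]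
    -- final convergence statement
    have final : ∀ o : X, TT (fun p : ℕ × ℕ =>
        gromovProd o (w p.1 • y) (g₀ ^ (s * ((p.2 : ℕ) : ℤ)) • x)) := by
      intro o MM
      set ρ : ℝ := (a : ℝ) * dist x (g₀ • x) with hρdef
      have hρ0 : 0 ≤ ρ := by positivity
      set T₀ : ℝ := MM + dist x o + δ + ρ with hT₀def
      obtain ⟨N₂, hN₂⟩ := tendsto_iff_TT.mp (hw x) (T₀ + CC + 2 * δ)
      set k₁ : ℕ := a + ⌈(T₀ + Bx + δ) / L⌉₊ with hk₁def
      refine ⟨max (max N₀ N₂) k₁, fun n k hn hk => ?_⟩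
      show MM ≤ gromovProd o (w n • y) (g₀ ^ (s * ((k : ℕ) : ℤ)) • x)
      have hnN₀ : N₀ ≤ n := le_trans (le_trans (le_max_left _ _) (le_max_left _ _)) hn
      have hnN₂ : N₂ ≤ n := le_trans (le_trans (le_max_right _ _) (le_max_left _ _)) hn
      have hkk₁ : k₁ ≤ k := le_trans (le_max_right _ _) hk
      have ha0 : 0 < a := by omega
      have hak : a ≤ k := by omega
      set j : ℕ := k / a with hjdef
      have hj1 : 1 ≤ j := (Nat.one_le_div_iff ha0).mpr hak
      set r : ℕ := k % a with hrdef
      have hrlt : r < a := Nat.mod_lt _ ha0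
      have hdm : j * a + r = k := by
        rw [hjdef, hrdef, mul_comm]
        exact Nat.div_add_mod k a
      have hcast2 : (j : ℝ) * (a : ℝ) + (r : ℝ) = (k : ℝ) := by exact_mod_cast hdm
      have hdn : T₀ + CC + 2 * δ ≤ dist x (w n • y) := by
        have h := hN₂ n n hnN₂ hnN₂
        simp only [] at h
        rwa [gp_diag] at h
      set mstar : ℕ := max (M n) (j + 1) with hmstardef
      have hup : dist x (w n • y) - (CC + δ) ≤
          gromovProd x (w n • y) (A (s * ((mstar : ℕ) : ℤ))) := by
        have hid := gp_ident x (w n • y) (A (s * ((mstar : ℕ) : ℤ)))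
        have hHs := Hs n hnN₀ mstar (le_max_left _ _)
        linarith
      have hdp : L * (j : ℝ) * (a : ℝ) - Bx ≤
          gromovProd x (A (s * ((j : ℕ) : ℤ))) (A (s * ((mstar : ℕ) : ℤ))) :=
        hdepth s ((j : ℕ) : ℤ) ((mstar : ℕ) : ℤ) hs (by exact_mod_cast hj1)
          (by have hlt : j < mstar := by omega
              exact_mod_cast hlt)
      have hk₁r : (T₀ + Bx + δ) / L ≤ (k : ℝ) - (a : ℝ) := by
        have h0 : a + ⌈(T₀ + Bx + δ) / L⌉₊ ≤ k := by rw [← hk₁def]; exact hkk₁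
        have h1 : ((a + ⌈(T₀ + Bx + δ) / L⌉₊ : ℕ) : ℝ) ≤ (k : ℝ) := by exact_mod_cast h0
        push_cast at h1
        have h2 := Nat.le_ceil ((T₀ + Bx + δ) / L)
        linarith
      have hdpT : T₀ + δ ≤ L * (j : ℝ) * (a : ℝ) - Bx := by
        have h3 : T₀ + Bx + δ ≤ L * ((k : ℝ) - (a : ℝ)) := by
          rw [div_le_iff₀ hLpos] at hk₁r
          linarith
        have h4 : (k : ℝ) - (a : ℝ) ≤ (j : ℝ) * (a : ℝ) := by
          have hra : (r : ℝ) ≤ (a : ℝ) := by exact_mod_cast hrlt.le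
          linarith
        have h5 : L * ((k : ℝ) - (a : ℝ)) ≤ L * ((j : ℝ) * (a : ℝ)) :=
          mul_le_mul_of_nonneg_left h4 hLpos.le
        have h6 : L * (j : ℝ) * (a : ℝ) = L * ((j : ℝ) * (a : ℝ)) := by ring
        rw [h6]
        linarith
      have hdp' : L * (j : ℝ) * (a : ℝ) - Bx ≤
          gromovProd x (A (s * ((mstar : ℕ) : ℤ))) (A (s * ((j : ℕ) : ℤ))) := by
        rw [gp_comm]; exact hdp
      have h4pt := hhyp x (w n • y) (A (s * ((mstar : ℕ) : ℤ))) (A (s * ((j : ℕ) : ℤ)))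
      have hAj : T₀ ≤ gromovProd x (w n • y) (A (s * ((j : ℕ) : ℤ))) := by
        rcases min_cases (gromovProd x (w n • y) (A (s * ((mstar : ℕ) : ℤ))))
            (gromovProd x (A (s * ((mstar : ℕ) : ℤ))) (A (s * ((j : ℕ) : ℤ)))) with
          ⟨he, _⟩ | ⟨he, _⟩
        · rw [he] at h4pt; linarith
        · rw [he] at h4pt; linarith
      have hezN : ((j * a + r : ℕ) : ℤ) = (k : ℤ) := by exact_mod_cast hdm
      push_cast at hezN
      have hmove : dist (A (s * ((j : ℕ) : ℤ))) (g₀ ^ (s * ((k : ℕ) : ℤ)) • x) ≤ ρ := by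
        have hd1 : dist (A (s * ((j : ℕ) : ℤ))) (g₀ ^ (s * ((k : ℕ) : ℤ)) • x)
            = dist x (g₀ ^ (s * ((k : ℕ) : ℤ) - s * ((j : ℕ) : ℤ) * (a : ℤ)) • x) := by
          simp only [hAdef]
          exact horb hiso g₀ x (s * ((j : ℕ) : ℤ) * (a : ℤ)) (s * ((k : ℕ) : ℤ))
        have hd2 : dist x (g₀ ^ (s * ((k : ℕ) : ℤ) - s * ((j : ℕ) : ℤ) * (a : ℤ)) • x)
            = dist x (g₀ ^ ((r : ℤ)) • x) := by
          rcases hs with rfl | rfl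
          · rw [show (1 : ℤ) * ((k : ℕ) : ℤ) - 1 * ((j : ℕ) : ℤ) * (a : ℤ) = ((r : ℕ) : ℤ) by
              linear_combination - hezN]
          · rw [show (-1 : ℤ) * ((k : ℕ) : ℤ) - (-1) * ((j : ℕ) : ℤ) * (a : ℤ)
                = -((r : ℕ) : ℤ) by linear_combination hezN]
            rw [hnegZ]
        rw [hd1, hd2, ← hzn]
        calc dist x ((g₀ ^ r) • x) ≤ r * dist x (g₀ • x) := hupper hiso g₀ x r
          _ ≤ ρ := by
            rw [hρdef]
            have hra : (r : ℝ) ≤ (a : ℝ) := by exact_mod_cast hrlt.le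
            nlinarith [dist_nonneg (x := x) (y := g₀ • x)]
      have hfin : T₀ - ρ ≤ gromovProd x (w n • y) (g₀ ^ (s * ((k : ℕ) : ℤ)) • x) := by
        have hmvv := gp_move x (w n • y) (A (s * ((j : ℕ) : ℤ))) (g₀ ^ (s * ((k : ℕ) : ℤ)) • x)
        linarith
      have hbase := gp_base o x (w n • y) (g₀ ^ (s * ((k : ℕ) : ℤ)) • x)
      rw [hT₀def] at hfin
      linarith
    rcases hs with rfl | rfl
    · left
      refine ⟨hw, hfwd, fun o => tendsto_iff_TT.mpr ?_⟩
      intro MM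
      obtain ⟨N, hN⟩ := final o MM
      refine ⟨N, fun m k hm hk => ?_⟩
      have h := hN m k hm hk
      simp only [] at h
      show MM ≤ gromovProd o (w m • y) ((g₀ ^ k) • x)
      rwa [show (1 : ℤ) * ((k : ℕ) : ℤ) = ((k : ℕ) : ℤ) by ring, ← hzn] at h
    · right
      refine ⟨hw, hbwd, fun o => tendsto_iff_TT.mpr ?_⟩
      intro MM
      obtain ⟨N, hN⟩ := final o MM
      refine ⟨N, fun m k hm hk => ?_⟩
      have h := hN m k hm hk
      simp only [] at h
      show MM ≤ gromovProd o (w m • y) ((g₀⁻¹ ^ k) • x)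
      rwa [show (-1 : ℤ) * ((k : ℕ) : ℤ) = -((k : ℕ) : ℤ) by ring, ← hzninv] at h
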